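/- arXiv:0708.0714 — 3 statements merged into one kernel-verified Lean document; each statement's English description precedes it below -/
import Mathlib

section
/- The group G(4,4,3) has no subgroup of order 12 that is core-free; in particular no subgroup of G(4,4,3) isomorphic to A₄ is core-free. -/
open Multiplicative

/-- Cyclic group of order m, multiplicatively. -/
abbrev Cyc (m : ℕ) := Multiplicative (ZMod m)

/-- Minimal faithful permutation degree. -/
noncomputable def mu (G : Type*) [Group G] : ℕ :=
  sInf {n | ∃ f : G →* Equiv.Perm (Fin n), Function.Injective f}

/-- Sym(n) acting on the base group (C_m)^n by permuting coordinates. -/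
def wreathAut (m n : ℕ) : Equiv.Perm (Fin n) →* MulAut (Fin n → Cyc m) where
  toFun σ :=
    { toFun := fun θ => θ ∘ σ.symm
      invFun := fun θ => θ ∘ σ
      left_inv := fun θ => by ext i; simp
      right_inv := fun θ => by ext i; simp
      map_mul' := fun θ₁ θ₂ => rfl }
  map_one' := by ext θ i; rfl
  map_mul' := fun σ τ => by ext θ i; rfl

/-- The wreath product C_m ≀ Sym(n). -/
abbrev Wr (m n : ℕ) := SemidirectProduct (Fin n → Cyc m) (Equiv.Perm (Fin n)) (wreathAut m n)

/-- A(m,p,n) = {θ ∈ (C_m)^n | (θ₁⋯θₙ)^{m/p} = 1}. -/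
def Apn (m p n : ℕ) : Subgroup (Fin n → Cyc m) where
  carrier := {θ | (∏ i, θ i) ^ (m / p) = 1}
  one_mem' := by simp
  mul_mem' := by
    intro α β hα hβ
    simp only [Set.mem_setOf_eq, Pi.mul_apply] at *
    rw [Finset.prod_mul_distrib, mul_pow, hα, hβ, one_mul]
  inv_mem' := by
    intro α hα
    simp only [Set.mem_setOf_eq, Pi.inv_apply] at *
    rw [Finset.prod_inv_distrib, inv_pow, hα, inv_one]

lemma apn_act_mem {m p n : ℕ} (σ : Equiv.Perm (Fin n)) {θ : Fin n → Cyc m}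
    (hθ : θ ∈ Apn m p n) : wreathAut m n σ θ ∈ Apn m p n := by
  have : ∏ i, θ (σ.symm i) = ∏ i, θ i := Equiv.prod_comp σ.symm θ
  simpa [Apn, wreathAut, Subgroup.mem_mk, Set.mem_setOf_eq, Function.comp, this] using hθ

/-- G(m,p,n) = A(m,p,n) ⋊ Sym(n), realized inside C_m ≀ Sym(n). -/
def Gmpn (m p n : ℕ) : Subgroup (Wr m n) where
  carrier := {g | g.left ∈ Apn m p n}
  one_mem' := by
    show (1 : Wr m n).left ∈ Apn m p n
    rw [SemidirectProduct.one_left]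
    exact one_mem _
  mul_mem' := by
    intro g h hg hh
    show (g * h).left ∈ Apn m p n
    rw [SemidirectProduct.mul_left]
    exact mul_mem hg (apn_act_mem g.right hh)
  inv_mem' := by
    intro g hg
    show g⁻¹.left ∈ Apn m p n
    rw [SemidirectProduct.inv_left]
    exact apn_act_mem _ (inv_mem hg)


namespace Stmt10Aux

open SemidirectProduct

instance : Finite (Wr 4 3) :=
  Finite.of_injective (fun g => (g.left, g.right)) (by
    intro a b h
    simp only [Prod.mk.injEq] at h
    exact SemidirectProduct.ext h.1 h.2)

set_option maxRecDepth 10000 in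
lemma key : ∀ σ : Equiv.Perm (Fin 3), σ^3 = 1 → σ ≠ 1 →
    ∀ θ : Fin 3 → Cyc 4, (∏ i, θ i) = 1 → θ ≠ 1 →
    ∀ v : Fin 3 → Cyc 4, v^2 = 1 → (∏ i, v i) = 1 →
    ∃ i j k : Fin 4, v = θ^(i:ℕ) * (θ ∘ σ.symm)^(j:ℕ) * ((θ ∘ σ.symm) ∘ σ.symm)^(k:ℕ) := by
  decide

set_option maxRecDepth 4000 in
lemma pow4 : ∀ θ : Fin 3 → Cyc 4, θ^4 = 1 := by decide

lemma conj_inl (b : Wr 4 3) (θ : Fin 3 → Cyc 4) :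
    b * inl θ * b⁻¹ = inl (wreathAut 4 3 b.right θ) := by
  ext
  · simp [mul_left, inv_left, mul_assoc, mul_comm]
  · simp [mul_right, inv_right]

lemma prod_eq_one_of_mem {θ : Fin 3 → Cyc 4} (h : θ ∈ Apn 4 4 3) : (∏ i, θ i) = 1 := by
  have h' : (∏ i, θ i) ^ (4/4) = 1 := h
  rwa [show (4/4 : ℕ) = 1 from rfl, pow_one] at h'

/-- Core technical lemma: any subgroup of order 12 contains every `inl u` with `u² = 1`. -/
lemma mem_of_order_two (L : Subgroup (Gmpn 4 4 3)) (hcard : Nat.card L = 12)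
    (u : Fin 3 → Cyc 4) (hu2 : u^2 = 1) (huA : u ∈ Apn 4 4 3)
    (g : Gmpn 4 4 3) (hg : (g : Wr 4 3) = inl u) : g ∈ L := by
  haveI : Fintype (Gmpn 4 4 3) := Fintype.ofFinite _
  haveI : Fintype L := Fintype.ofFinite _
  haveI : Fact (Nat.Prime 3) := ⟨by norm_num⟩
  -- Cauchy: get an element of order 3 in L
  obtain ⟨x, hx⟩ : ∃ x : L, orderOf x = 3 := by
    refine exists_prime_orderOf_dvd_card 3 ?_
    rw [← Nat.card_eq_fintype_card, hcard]
    norm_num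
  set xG : Gmpn 4 4 3 := (x : Gmpn 4 4 3) with hxG
  have hxL : xG ∈ L := x.2
  have hx3 : xG ^ 3 = 1 := by
    have : x ^ 3 = 1 := by
      have h := pow_orderOf_eq_one x
      rwa [hx] at h
    have := congrArg (Subtype.val) this
    simpa using this
  have hxne : xG ≠ 1 := by
    intro h1
    have hx1 : (x : Gmpn 4 4 3) = 1 := by rw [← hxG]; exact h1
    have : x = 1 := Subtype.ext hx1
    rw [this] at hx
    simp at hx
  set σ : Equiv.Perm (Fin 3) := (xG : Wr 4 3).right with hσ
  have hσ3 : σ ^ 3 = 1 := by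
    have := congrArg (Subtype.val) hx3
    have := congrArg (rightHom (φ := wreathAut 4 3)) this
    simp only [SubmonoidClass.coe_pow, OneMemClass.coe_one, map_pow, map_one, rightHom_eq_right] at this
    exact this
  have hσ1 : σ ≠ 1 := by
    intro h1
    apply hxne
    have hxval : (xG : Wr 4 3) = inl (xG : Wr 4 3).left := by
      rw [← inl_left_mul_inr_right (xG : Wr 4 3), ← hσ, h1]
      simp
    have hl3 : (xG : Wr 4 3).left ^ 3 = 1 := by
      have h3 := congrArg (Subtype.val) hx3
      simp only [SubmonoidClass.coe_pow, OneMemClass.coe_one] at h3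
      rw [hxval, ← map_pow] at h3
      exact inl_injective (by simpa using h3)
    have hl4 : (xG : Wr 4 3).left ^ 4 = 1 := pow4 _
    have hl : (xG : Wr 4 3).left = 1 := by
      have : (xG : Wr 4 3).left ^ 4 = (xG : Wr 4 3).left ^ 3 * (xG : Wr 4 3).left :=
        pow_succ _ 3
      rw [hl4, hl3, one_mul] at this
      exact this.symm
    apply Subtype.ext
    rw [hxval, hl]
    simp
  -- find a nontrivial element of L in the kernel of rightHom
  obtain ⟨w, hwL, hwne, hwr⟩ : ∃ w : Gmpn 4 4 3, w ∈ L ∧ w ≠ 1 ∧ (w : Wr 4 3).right = 1 := by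
    by_contra hcon
    push_neg at hcon
    set f : L →* Equiv.Perm (Fin 3) :=
      (rightHom (φ := wreathAut 4 3)).comp ((Gmpn 4 4 3).subtype.comp L.subtype) with hf
    have hinj : Function.Injective f := by
      rw [injective_iff_map_eq_one]
      intro a ha
      have h0 : ((a : Gmpn 4 4 3) : Wr 4 3).right = 1 := ha
      by_contra hne
      have hane : (a : Gmpn 4 4 3) ≠ 1 := by
        intro h1
        exact hne (by apply Subtype.ext; simpa using h1)
      exact hcon _ a.2 hane h0
    have hle : Nat.card L ≤ Nat.card (Equiv.Perm (Fin 3)) :=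
      Nat.card_le_card_of_injective f hinj
    rw [hcard, Nat.card_eq_fintype_card, Fintype.card_perm, Fintype.card_fin] at hle
    norm_num [Nat.factorial] at hle
  set θ : Fin 3 → Cyc 4 := (w : Wr 4 3).left with hθ
  have hwval : (w : Wr 4 3) = inl θ := by
    rw [← inl_left_mul_inr_right (w : Wr 4 3), hwr]
    simp [hθ]
  have hθA : θ ∈ Apn 4 4 3 := w.2
  have hθprod : (∏ i, θ i) = 1 := prod_eq_one_of_mem hθA
  have hθne : θ ≠ 1 := by
    intro h1
    apply hwne
    apply Subtype.ext
    rw [hwval, h1]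
    simp
  -- conjugates of w by x
  have hc1L : xG * w * xG⁻¹ ∈ L := L.mul_mem (L.mul_mem hxL hwL) (L.inv_mem hxL)
  have hc2L : xG * (xG * w * xG⁻¹) * xG⁻¹ ∈ L :=
    L.mul_mem (L.mul_mem hxL hc1L) (L.inv_mem hxL)
  have hc1val : ((xG * w * xG⁻¹ : Gmpn 4 4 3) : Wr 4 3) = inl (θ ∘ σ.symm) := by
    show (xG : Wr 4 3) * (w : Wr 4 3) * (xG : Wr 4 3)⁻¹ = _
    rw [hwval, conj_inl]
    rfl
  have hc2val : ((xG * (xG * w * xG⁻¹) * xG⁻¹ : Gmpn 4 4 3) : Wr 4 3)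
      = inl ((θ ∘ σ.symm) ∘ σ.symm) := by
    show (xG : Wr 4 3) * _ * (xG : Wr 4 3)⁻¹ = _
    rw [hc1val, conj_inl]
    rfl
  obtain ⟨i, j, k, huv⟩ := key σ hσ3 hσ1 θ hθprod hθne u hu2 (prod_eq_one_of_mem huA)
  have : g = w ^ (i:ℕ) * (xG * w * xG⁻¹) ^ (j:ℕ) * (xG * (xG * w * xG⁻¹) * xG⁻¹) ^ (k:ℕ) := by
    apply Subtype.ext
    rw [show ((w ^ (i:ℕ) * (xG * w * xG⁻¹) ^ (j:ℕ) * (xG * (xG * w * xG⁻¹) * xG⁻¹) ^ (k:ℕ) :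
        Gmpn 4 4 3) : Wr 4 3) = ((w : Wr 4 3)) ^ (i:ℕ) * ((xG * w * xG⁻¹ : Gmpn 4 4 3) : Wr 4 3) ^ (j:ℕ)
        * ((xG * (xG * w * xG⁻¹) * xG⁻¹ : Gmpn 4 4 3) : Wr 4 3) ^ (k:ℕ) from rfl]
    rw [hg, hc1val, hc2val, hwval, ← map_pow, ← map_pow, ← map_pow, ← map_mul, ← map_mul, huv]
  rw [this]
  exact L.mul_mem (L.mul_mem (L.pow_mem hwL _) (L.pow_mem hc1L _)) (L.pow_mem hc2L _)

/-- The distinguished element (2,2,0) of the Klein normal subgroup, inside G(4,4,3). -/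
def vv : Fin 3 → Cyc 4 := ![ofAdd 2, ofAdd 2, ofAdd 0]

lemma vv_sq : vv ^ 2 = 1 := by decide

lemma vv_mem : vv ∈ Apn 4 4 3 := by
  show (∏ i, vv i) ^ (4/4) = 1
  decide

lemma vv_ne : vv ≠ 1 := by decide

def vG : Gmpn 4 4 3 := ⟨inl vv, show (inl vv : Wr 4 3).left ∈ Apn 4 4 3 from vv_mem⟩

lemma core12 (L : Subgroup (Gmpn 4 4 3)) (hcard : Nat.card L = 12) : L.normalCore ≠ ⊥ := by
  have hvG : vG ∈ L.normalCore := by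
    show ∀ b : Gmpn 4 4 3, b * vG * b⁻¹ ∈ L
    intro b
    set u : Fin 3 → Cyc 4 := wreathAut 4 3 (b : Wr 4 3).right vv with hu
    refine mem_of_order_two L hcard u ?_ (apn_act_mem _ vv_mem) _ ?_
    · funext i0
      have := congrFun vv_sq (((b : Wr 4 3).right).symm i0)
      simpa [hu, wreathAut, pow_two] using this
    · show (b : Wr 4 3) * (vG : Wr 4 3) * (b : Wr 4 3)⁻¹ = inl u
      rw [show (vG : Wr 4 3) = inl vv from rfl, conj_inl]
  intro hbot
  rw [hbot, Subgroup.mem_bot] at hvG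
  have : inl vv = (1 : Wr 4 3) := congrArg Subtype.val hvG
  rw [show (1 : Wr 4 3) = inl 1 from (map_one _).symm] at this
  exact vv_ne (inl_injective this)

end Stmt10Aux

theorem stmt10 :
    (∀ L : Subgroup (Gmpn 4 4 3), Nat.card L = 12 → L.normalCore ≠ ⊥) ∧
    (∀ L : Subgroup (Gmpn 4 4 3), Nonempty (L ≃* alternatingGroup (Fin 4)) →
      L.normalCore ≠ ⊥) := by
  constructor
  · exact fun L h => Stmt10Aux.core12 L h
  · intro L ⟨e⟩
    apply Stmt10Aux.core12 L
    have h1 : Nat.card L = Nat.card (alternatingGroup (Fin 4)) := Nat.card_congr e.toEquiv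
    rw [h1, Nat.card_eq_fintype_card]
    decide
end

section
/- The minimal faithful permutation degree of G(4,4,3) is 12. -/
open Multiplicative

set_option maxRecDepth 100000
set_option synthInstance.maxHeartbeats 1000000

namespace Stmt13

abbrev NT := Fin 3 → Cyc 4
abbrev ST := Equiv.Perm (Fin 3)

def wrEquiv : (NT × ST) ≃ Wr 4 3 where
  toFun p := ⟨p.1, p.2⟩
  invFun g := (g.left, g.right)
  left_inv _ := rfl
  right_inv _ := rfl

instance : DecidableEq (Wr 4 3) := wrEquiv.symm.decidableEq
instance : Fintype (Wr 4 3) := Fintype.ofEquiv _ wrEquiv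

instance : DecidablePred (· ∈ Gmpn 4 4 3) :=
  fun g => decidable_of_iff ((∏ i, g.left i) ^ (4 / 4) = 1) Iff.rfl

abbrev GG := ↥(Gmpn 4 4 3)

instance : Fintype GG := Subtype.fintype _

example : (⟨⟨![ofAdd 2, ofAdd 2, 1], 1⟩, by decide⟩ : GG) ≠ 1 := by
  intro h
  exact absurd (congrArg (fun x => x.1.left) h) (by decide)

def permOf : Wr 4 3 →* Equiv.Perm (Fin 3 × ZMod 4) where
  toFun g :=
    { toFun := fun p => (g.right p.1, p.2 + toAdd (g.left (g.right p.1)))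
      invFun := fun p => (g.right⁻¹ p.1, p.2 - toAdd (g.left p.1))
      left_inv := by
        intro p
        simp
      right_inv := by
        intro p
        simp }
  map_one' := by
    ext p <;> simp
  map_mul' := by
    intro g h
    ext p
    · simp [SemidirectProduct.mul_right]
    · simp [SemidirectProduct.mul_left, SemidirectProduct.mul_right, wreathAut]
      ring

lemma permOf_inj : Function.Injective permOf := by
  rw [injective_iff_map_eq_one]
  intro g hg
  have h1 : ∀ p : Fin 3 × ZMod 4, permOf g p = p := by
    intro p; rw [hg]; rfl
  have hr : g.right = 1 := by
    ext i
    have := congrArg Prod.fst (h1 (i, 0))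
    simp only [permOf] at this
    exact congrArg Fin.val this
  have hl : g.left = 1 := by
    funext i
    have h2 := congrArg Prod.snd (h1 (g.right⁻¹ i, 0))
    simp [permOf] at h2
    simpa using h2
  ext
  · rw [hl]; rfl
  · rw [hr]; rfl

noncomputable def e12 : (Fin 3 × ZMod 4) ≃ Fin 12 := Fintype.equivFinOfCardEq (by simp)

def permCongrHom {α β : Type*} (e : α ≃ β) : Equiv.Perm α →* Equiv.Perm β where
  toFun σ := e.permCongr σ
  map_one' := by ext x; simp
  map_mul' σ τ := by ext x; simp

lemma permCongrHom_inj {α β : Type*} (e : α ≃ β) : Function.Injective (permCongrHom e) := by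
  intro a b h
  ext x
  have := congrArg (fun σ => e.symm (σ (e x))) h
  simpa [permCongrHom] using this

noncomputable def f12 : GG →* Equiv.Perm (Fin 12) :=
  (permCongrHom e12).comp (permOf.comp (Gmpn 4 4 3).subtype)

lemma f12_inj : Function.Injective f12 :=
  (permCongrHom_inj e12).comp (permOf_inj.comp (Gmpn 4 4 3).subtype_injective)

/-! ### Lower bound -/

def pi3 : GG →* ST := SemidirectProduct.rightHom.comp (Gmpn 4 4 3).subtype

def VV : Subgroup GG := pi3.ker

lemma mem_VV {g : GG} : g ∈ VV ↔ g.1.right = 1 := Iff.rfl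

-- three involutions
def t1 : NT := ![ofAdd 2, ofAdd 2, 1]
def t2 : NT := ![ofAdd 2, 1, ofAdd 2]
def t3 : NT := ![1, ofAdd 2, ofAdd 2]

def z1 : GG := ⟨⟨t1, 1⟩, by decide⟩
def z2 : GG := ⟨⟨t2, 1⟩, by decide⟩
def z3 : GG := ⟨⟨t3, 1⟩, by decide⟩

lemma z1_mem_VV : z1 ∈ VV := rfl
lemma z2_mem_VV : z2 ∈ VV := rfl
lemma z3_mem_VV : z3 ∈ VV := rfl

lemma z1_ne_one : z1 ≠ 1 := by
  intro h
  exact absurd (congrArg (fun x => x.1.left) h) (by decide)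

-- decidable facts
lemma D2 : ∀ θ : NT, θ * θ = 1 → (∏ i, θ i) = 1 →
    θ = 1 ∨ θ = t1 ∨ θ = t2 ∨ θ = t3 := by decide

lemma D1 : ∀ (c : ST) (θ : NT), c ^ 3 = 1 → c ≠ 1 → (∏ i, θ i) = 1 →
    (∀ i, θ (c.symm i) = θ i) → θ = 1 := by decide

lemma D4 : ∀ θ : NT, θ ^ 4 = 1 := by decide

-- membership product condition
lemma prod_left_eq_one (g : GG) : (∏ i, g.1.left i) = 1 := by
  have h2 : (∏ i, g.1.left i) ^ (4 / 4) = 1 := g.2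
  simpa using h2

-- commutation in VV
lemma Vcomm (a b : GG) (ha : a.1.right = 1) (hb : b.1.right = 1) : a * b = b * a := by
  apply Subtype.ext
  apply SemidirectProduct.ext
  · show a.1.left * wreathAut 4 3 a.1.right b.1.left
        = b.1.left * wreathAut 4 3 b.1.right a.1.left
    rw [ha, hb, map_one]
    exact mul_comm _ _
  · show a.1.right * b.1.right = b.1.right * a.1.right
    rw [ha, hb]

-- conjugation formula
lemma conj_right (h w : GG) (hw : w.1.right = 1) : (h * w * h⁻¹).1.right = 1 := by
  show (pi3 (h * w * h⁻¹)) = 1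
  rw [map_mul, map_mul, map_inv]
  have : pi3 w = 1 := hw
  rw [this]
  group

lemma conj_left (h w : GG) (hw : w.1.right = 1) :
    ∀ i, (h * w * h⁻¹).1.left i = w.1.left (h.1.right.symm i) := by
  intro i
  show ((h.1 * w.1) * (h.1)⁻¹).left i = _
  rw [SemidirectProduct.mul_left, SemidirectProduct.mul_left, SemidirectProduct.inv_left,
    SemidirectProduct.mul_right, hw, mul_one]
  simp only [wreathAut, MonoidHom.coe_mk, OneHom.coe_mk, MulEquiv.coe_mk, Equiv.coe_fn_mk,
    map_inv, Pi.mul_apply, Function.comp_apply, Pi.inv_apply]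
  rw [MulAut.inv_def]
  simp only [MulEquiv.symm_mk, MulEquiv.coe_mk, Equiv.coe_fn_mk, Function.comp_apply,
    Equiv.apply_symm_apply]
  rw [mul_comm ((h.1).left i), mul_assoc]
  simp

-- card VV = 16
def mkV (a b : ZMod 4) : NT := ![ofAdd a, ofAdd b, ofAdd (-a - b)]

lemma mkV_mem (a b : ZMod 4) : (⟨mkV a b, 1⟩ : Wr 4 3) ∈ Gmpn 4 4 3 := by
  show (∏ i, mkV a b i) ^ (4 / 4) = 1
  rw [Fin.prod_univ_three]
  simp only [mkV, Matrix.cons_val_zero, Matrix.cons_val_one, Matrix.head_cons,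
    Matrix.cons_val_two, Matrix.tail_cons, ← ofAdd_add]
  norm_num

def eV : (ZMod 4 × ZMod 4) ≃ ↥VV where
  toFun p := ⟨⟨⟨mkV p.1 p.2, 1⟩, mkV_mem p.1 p.2⟩, rfl⟩
  invFun v := (toAdd (v.1.1.left 0), toAdd (v.1.1.left 1))
  left_inv p := by
    simp [mkV]
  right_inv v := by
    apply Subtype.ext
    apply Subtype.ext
    apply SemidirectProduct.ext
    · show mkV (toAdd (v.1.1.left 0)) (toAdd (v.1.1.left 1)) = v.1.1.left
      have hp : v.1.1.left 0 * v.1.1.left 1 * v.1.1.left 2 = 1 := by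
        have := prod_left_eq_one v.1
        rwa [Fin.prod_univ_three] at this
      have h2 : v.1.1.left 2 = (v.1.1.left 0 * v.1.1.left 1)⁻¹ :=
        (inv_eq_of_mul_eq_one_right hp).symm
      funext i
      fin_cases i
      · simp [mkV]
      · simp [mkV]
      · show ofAdd (-(toAdd (v.1.1.left 0)) - toAdd (v.1.1.left 1)) = v.1.1.left 2
        rw [h2, show -(toAdd (v.1.1.left 0)) - toAdd (v.1.1.left 1)
            = -((toAdd (v.1.1.left 0)) + toAdd (v.1.1.left 1)) by ring]
        rw [ofAdd_neg, ofAdd_add]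
        simp
    · exact (mem_VV.mp v.2).symm

lemma card_VV : Nat.card ↥VV = 16 := by
  rw [Nat.card_congr eV.symm]
  simp [Nat.card_eq_fintype_card]

lemma pi3_surj : Function.Surjective pi3 := by
  intro σ
  exact ⟨⟨⟨1, σ⟩, by show (∏ i, (1:NT) i) ^ (4/4) = 1; simp⟩, rfl⟩

lemma card_GG : Nat.card GG = 96 := by
  have h1 := Subgroup.card_eq_card_quotient_mul_card_subgroup pi3.ker
  have h2 : Nat.card (GG ⧸ pi3.ker) = Nat.card ↥pi3.range :=
    Nat.card_congr (QuotientGroup.quotientKerEquivRange pi3).toEquiv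
  have h3 : pi3.range = ⊤ := MonoidHom.range_eq_top_of_surjective _ pi3_surj
  have h4 : Nat.card ↥pi3.range = 6 := by
    rw [h3]
    rw [Nat.card_congr Subgroup.topEquiv.toEquiv]
    simp only [Nat.card_eq_fintype_card]
    rw [Fintype.card_perm]
    rfl
  have h5 : Nat.card ↥pi3.ker = 16 := card_VV
  rw [h1, h2, h4, h5]

-- helpers
lemma eq_one_of_V (w : GG) (h1 : w.1.left = 1) (h2 : w.1.right = 1) : w = 1 := by
  apply Subtype.ext
  apply SemidirectProduct.ext
  · rw [h1]; rfl
  · rw [h2]; rfl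

lemma sq_left (w : GG) (hw : w.1.right = 1) : (w * w).1.left = w.1.left * w.1.left := by
  show w.1.left * wreathAut 4 3 w.1.right w.1.left = _
  rw [hw, map_one]
  rfl

lemma sq_right (w : GG) (hw : w.1.right = 1) : (w * w).1.right = 1 := by
  show w.1.right * w.1.right = 1
  rw [hw, mul_one]

lemma V_pow4 (w : GG) (hw : w.1.right = 1) : w ^ 4 = 1 := by
  have h4 : w ^ 4 = (w * w) * (w * w) := by
    show w ^ (2 + 2) = _
    rw [pow_add, pow_two]
  rw [h4]
  apply eq_one_of_V
  · rw [sq_left _ (sq_right w hw), sq_left w hw]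
    have := D4 w.1.left
    rw [show w.1.left ^ 4 = (w.1.left * w.1.left) * (w.1.left * w.1.left) by
      show w.1.left ^ (2 + 2) = _
      rw [pow_add, pow_two]] at this
    exact this
  · exact sq_right _ (sq_right w hw)

lemma fix_of_conj (h w : GG) (hw : w.1.right = 1) (hc3 : h.1.right ^ 3 = 1)
    (hc1 : h.1.right ≠ 1) (heq : h * w * h⁻¹ = w) : w = 1 := by
  have hl : ∀ i, w.1.left (h.1.right.symm i) = w.1.left i := by
    intro i
    conv_rhs => rw [← heq]
    exact (conj_left h w hw i).symm
  exact eq_one_of_V w (D1 h.1.right w.1.left hc3 hc1 (prod_left_eq_one w) hl) hw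

lemma VVcomm (a b : ↥VV) : a * b = b * a :=
  Subtype.ext (Vcomm a.1 b.1 a.2 b.2)

def v0 : GG := ⟨⟨![ofAdd 1, ofAdd 1, ofAdd 2], 1⟩, by decide⟩

lemma v0_mem_VV : v0 ∈ VV := rfl

lemma v0_sq : v0 * v0 = z1 := by
  apply Subtype.ext
  show (v0.1 * v0.1 : Wr 4 3) = z1.1
  decide

lemma exists_order3 (H : Subgroup GG) (h3 : 3 ∣ Nat.card ↥((pi3.comp H.subtype).range)) :
    ∃ h : GG, h ∈ H ∧ (h.1.right) ^ 3 = 1 ∧ h.1.right ≠ 1 := by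
  haveI : Fact (Nat.Prime 3) := ⟨by norm_num⟩
  haveI := Fintype.ofFinite ↥((pi3.comp H.subtype).range)
  rw [Nat.card_eq_fintype_card] at h3
  obtain ⟨x, hx⟩ := exists_prime_orderOf_dvd_card 3 h3
  obtain ⟨y, hy⟩ := MonoidHom.mem_range.mp x.2
  have hyr : (y.1).1.right = (x : ST) := hy ▸ rfl
  refine ⟨y.1, y.2, ?_, ?_⟩
  · rw [hyr]
    have : (x ^ 3 : ↥((pi3.comp H.subtype).range)) = 1 := by
      have h0 := pow_orderOf_eq_one x
      rwa [hx] at h0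
    calc (x : ST) ^ 3 = ((x ^ 3 : _) : ST) := by rw [SubmonoidClass.coe_pow]
      _ = 1 := by rw [this]; rfl
  · intro hcontr
    rw [hyr] at hcontr
    have : x = 1 := OneMemClass.coe_eq_one.mp hcontr
    rw [this] at hx
    simp at hx

lemma eq_of_parts (w w' : GG) (hl : w.1.left = w'.1.left) (hr : w.1.right = w'.1.right) :
    w = w' := Subtype.ext (SemidirectProduct.ext hl hr)

lemma key (H : Subgroup GG) (hH : 9 ≤ Nat.card ↥H) : z1 ∈ H := by
  classical
  set W : Subgroup GG := VV ⊓ H with hWdef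
  have hWH : W ≤ H := inf_le_right
  have hWV : W ≤ VV := inf_le_left
  set ρ : ↥H →* ST := pi3.comp H.subtype with hρ
  have hker : ρ.ker = VV.subgroupOf H := rfl
  have hkerW : Nat.card ↥ρ.ker = Nat.card ↥W := by
    rw [hker, ← Subgroup.inf_subgroupOf_right VV H]
    exact Nat.card_congr (Subgroup.subgroupOfEquivOfLe inf_le_right).toEquiv
  have hcard : Nat.card ↥H = Nat.card ↥ρ.range * Nat.card ↥W := by
    rw [← hkerW, Subgroup.card_eq_card_quotient_mul_card_subgroup ρ.ker]
    congr 1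
    exact Nat.card_congr (QuotientGroup.quotientKerEquivRange ρ).toEquiv
  have hQ6 : Nat.card ↥ρ.range ∣ 6 := by
    have h1 := Subgroup.card_subgroup_dvd_card ρ.range
    have h2 : Nat.card ST = 6 := by
      rw [Nat.card_eq_fintype_card, Fintype.card_perm]
      rfl
    rwa [h2] at h1
  have hW16 : Nat.card ↥W ∣ 16 := by
    have := Subgroup.card_dvd_of_le hWV
    rwa [card_VV] at this
  have hQcases : Nat.card ↥ρ.range = 1 ∨ Nat.card ↥ρ.range = 2 ∨ Nat.card ↥ρ.range = 3 ∨
      Nat.card ↥ρ.range = 6 := by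
    have : Nat.card ↥ρ.range ∈ Nat.divisors 6 := Nat.mem_divisors.mpr ⟨hQ6, by norm_num⟩
    rw [show Nat.divisors 6 = {1, 2, 3, 6} from by decide] at this
    simpa using this
  have hWcases : Nat.card ↥W = 1 ∨ Nat.card ↥W = 2 ∨ Nat.card ↥W = 4 ∨ Nat.card ↥W = 8 ∨
      Nat.card ↥W = 16 := by
    have : Nat.card ↥W ∈ Nat.divisors 16 := Nat.mem_divisors.mpr ⟨hW16, by norm_num⟩
    rw [show Nat.divisors 16 = {1, 2, 4, 8, 16} from by decide] at this
    simpa using this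
  -- helper: z1 ∈ W when index of W in VV is ≤ 2
  have hbig : Nat.card ↥W = 8 ∨ Nat.card ↥W = 16 → z1 ∈ H := by
    intro hc
    set W' : Subgroup ↥VV := W.subgroupOf VV with hW'
    have hcW' : Nat.card ↥W' = Nat.card ↥W :=
      Nat.card_congr (Subgroup.subgroupOfEquivOfLe hWV).toEquiv
    have hidx : Nat.card ↥W' * W'.index = 16 := by
      rw [Subgroup.card_mul_index, card_VV]
    haveI : W'.Normal := by
      constructor
      intro n hn g
      have hgn : g * n * g⁻¹ = n := by
        rw [VVcomm g n, mul_assoc, mul_inv_cancel, mul_one]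
      rwa [hgn]
    have hdvd2 : W'.index ∣ 2 := by
      rw [hcW'] at hidx
      rcases hc with h | h
      · rw [h] at hidx
        have : W'.index = 2 := by omega
        rw [this]
      · rw [h] at hidx
        have : W'.index = 1 := by omega
        rw [this]
        exact one_dvd 2
    have hsq : ∀ v : ↥VV, v ^ 2 ∈ W' := by
      intro v
      obtain ⟨j, hj⟩ := hdvd2
      have h1 : v ^ W'.index ∈ W' := W'.pow_index_mem v
      have : v ^ (2:ℕ) = (v ^ W'.index) ^ j := by rw [← pow_mul, ← hj]
      rw [this]
      exact pow_mem h1 j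
    have h2 := hsq ⟨v0, v0_mem_VV⟩
    rw [Subgroup.mem_subgroupOf] at h2
    have h3 : ((⟨v0, v0_mem_VV⟩ : ↥VV) ^ 2 : ↥VV).1 = v0 * v0 := by
      rw [SubmonoidClass.coe_pow, pow_two]
    rw [h3, v0_sq] at h2
    exact hWH h2
  rcases hWcases with hWc | hWc | hWc | hWc | hWc
  · -- card W = 1 : impossible
    exfalso
    rw [hcard, hWc, mul_one] at hH
    have : Nat.card ↥ρ.range ≤ 6 := Nat.le_of_dvd (by norm_num) hQ6
    omega
  · -- card W = 2 : impossible
    exfalso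
    have h3Q : 3 ∣ Nat.card ↥ρ.range := by
      rw [hcard, hWc] at hH
      rcases hQcases with h | h | h | h <;> rw [h] <;> omega
    obtain ⟨h, hhH, hc3, hc1⟩ := exists_order3 H h3Q
    obtain ⟨k, hkW, hk1⟩ : ∃ k ∈ W, k ≠ 1 := by
      rcases Subgroup.bot_or_exists_ne_one W with hbot | h
      · rw [hbot, Subgroup.card_bot] at hWc; omega
      · exact h
    have hkV : k.1.right = 1 := hWV hkW
    have hk2 : k * k = 1 := by
      have h1 : (⟨k, hkW⟩ : ↥W) ^ Nat.card ↥W = 1 := pow_card_eq_one'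
      rw [hWc] at h1
      have h2 := congrArg Subtype.val h1
      rw [SubmonoidClass.coe_pow, pow_two] at h2
      exact h2
    have horder : orderOf k = 2 := by
      haveI : Fact (Nat.Prime 2) := ⟨by norm_num⟩
      exact orderOf_eq_prime (by rw [pow_two]; exact hk2) hk1
    have hzp : Subgroup.zpowers k = W := by
      apply Subgroup.eq_of_le_of_card_ge (Subgroup.zpowers_le.mpr hkW)
      rw [Nat.card_zpowers, horder, hWc]
    set u := h * k * h⁻¹ with hu
    have huW : u ∈ W := by
      rw [hWdef]
      refine Subgroup.mem_inf.mpr ⟨mem_VV.mpr (conj_right h k hkV), ?_⟩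
      exact H.mul_mem (H.mul_mem hhH (hWH hkW)) (H.inv_mem hhH)
    have hu1 : u ≠ 1 := by
      intro hcontr
      apply hk1
      calc k = h⁻¹ * (h * k * h⁻¹) * h := by group
        _ = 1 := by rw [← hu, hcontr]; group
    have huk : u = k := by
      rw [← hzp] at huW
      obtain ⟨j, hj⟩ := Subgroup.mem_zpowers_iff.mp huW
      have hk2z : k ^ (2:ℤ) = 1 := by
        rw [show (2:ℤ) = ((2:ℕ):ℤ) from rfl, zpow_natCast, pow_two]
        exact hk2
      have hmod : u = k ^ (j % 2) := by
        conv_lhs => rw [← hj, show j = 2 * (j / 2) + j % 2 from (Int.mul_ediv_add_emod j 2).symm]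
        rw [zpow_add, zpow_mul, hk2z, one_zpow, one_mul]
      have : j % 2 = 0 ∨ j % 2 = 1 := by omega
      rcases this with h0 | h0
      · rw [h0] at hmod; simp at hmod; exact absurd hmod hu1
      · rw [h0] at hmod; simpa using hmod
    exact absurd (fix_of_conj h k hkV hc3 hc1 (huk)) hk1
  · -- card W = 4
    have h3Q : 3 ∣ Nat.card ↥ρ.range := by
      rw [hcard, hWc] at hH
      rcases hQcases with h | h | h | h <;> rw [h] <;> omega
    by_cases hall : ∀ w : GG, w ∈ W → w * w = 1
    · -- all involutions: W = {1, z1, z2, z3}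
      have hsub : (W : Set GG) ⊆ {1, z1, z2, z3} := by
        intro w hw
        have hwV : w.1.right = 1 := hWV hw
        have hsq : w.1.left * w.1.left = 1 := by
          have h2 := sq_left w hwV
          rw [hall w hw] at h2
          have h3 : ((1 : GG)).1.left = 1 := rfl
          exact h2.symm.trans h3
        rcases D2 w.1.left hsq (prod_left_eq_one w) with h | h | h | h
        · exact Or.inl (eq_of_parts w 1 (by rw [h]; rfl) (by rw [hwV]; rfl))
        · exact Or.inr (Or.inl (eq_of_parts w z1 (by rw [h]; rfl) (by rw [hwV]; rfl)))
        · exact Or.inr (Or.inr (Or.inl (eq_of_parts w z2 (by rw [h]; rfl) (by rw [hwV]; rfl))))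
        · exact Or.inr (Or.inr (Or.inr (eq_of_parts w z3 (by rw [h]; rfl) (by rw [hwV]; rfl))))
      have hncard : ({1, z1, z2, z3} : Set GG).ncard ≤ (W : Set GG).ncard := by
        have h1 : (W : Set GG).ncard = 4 := by
          rw [← Nat.card_coe_set_eq]
          exact hWc
        have h2 : ({1, z1, z2, z3} : Set GG).ncard ≤ 4 := by
          calc ({1, z1, z2, z3} : Set GG).ncard
              ≤ ({z1, z2, z3} : Set GG).ncard + 1 := Set.ncard_insert_le _ _
            _ ≤ (({z2, z3} : Set GG).ncard + 1) + 1 := by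
                have := Set.ncard_insert_le z1 ({z2, z3} : Set GG); omega
            _ ≤ ((({z3} : Set GG).ncard + 1) + 1) + 1 := by
                have := Set.ncard_insert_le z2 ({z3} : Set GG); omega
            _ = 4 := by rw [Set.ncard_singleton]
        omega
      have heq := Set.eq_of_subset_of_ncard_le hsub hncard (Set.toFinite _)
      have : z1 ∈ (W : Set GG) := by
        rw [heq]
        simp
      exact hWH this
    · push_neg at hall
      obtain ⟨w, hwW, hw2⟩ := hall
      exfalso
      obtain ⟨h, hhH, hc3, hc1⟩ := exists_order3 H h3Q
      have hwV : w.1.right = 1 := hWV hwW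
      have hw4 : w ^ 4 = 1 := V_pow4 w hwV
      have horder : orderOf w = 4 := by
        have hdvd : orderOf w ∣ 4 := orderOf_dvd_of_pow_eq_one hw4
        have hmem : orderOf w ∈ Nat.divisors 4 := Nat.mem_divisors.mpr ⟨hdvd, by norm_num⟩
        rw [show Nat.divisors 4 = {1, 2, 4} from by decide] at hmem
        simp at hmem
        rcases hmem with h0 | h0 | h0
        · exfalso; apply hw2; rw [h0]; exact one_mul 1
        · exfalso
          apply hw2
          have := pow_orderOf_eq_one w
          rw [h0, pow_two] at this
          exact this
        · exact h0
      have hzp : Subgroup.zpowers w = W := by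
        apply Subgroup.eq_of_le_of_card_ge (Subgroup.zpowers_le.mpr hwW)
        rw [Nat.card_zpowers, horder, hWc]
      set u := h * w * h⁻¹ with hu
      have huW : u ∈ W := by
        rw [hWdef]
        refine Subgroup.mem_inf.mpr ⟨mem_VV.mpr (conj_right h w hwV), ?_⟩
        exact H.mul_mem (H.mul_mem hhH (hWH hwW)) (H.inv_mem hhH)
      have hu2 : u * u ≠ 1 := by
        intro hcontr
        apply hw2
        have h1 : h * (w * w) * h⁻¹ = 1 := by
          rw [show h * (w * w) * h⁻¹ = u * u by rw [hu]; group]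
          exact hcontr
        calc w * w = h⁻¹ * (h * (w * w) * h⁻¹) * h := by group
          _ = 1 := by rw [h1]; group
      obtain ⟨j, hj⟩ : ∃ j : ℤ, w ^ j = u := by
        rw [← hzp] at huW
        exact Subgroup.mem_zpowers_iff.mp huW
      have hw4z : w ^ (4:ℤ) = 1 := by
        rw [show (4:ℤ) = ((4:ℕ):ℤ) from rfl, zpow_natCast]
        exact hw4
      have hmod : u = w ^ (j % 4) := by
        conv_lhs => rw [← hj, show j = 4 * (j / 4) + j % 4 from (Int.mul_ediv_add_emod j 4).symm]
        rw [zpow_add, zpow_mul, hw4z, one_zpow, one_mul]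
      have hjd : j % 4 = 0 ∨ j % 4 = 1 ∨ j % 4 = 2 ∨ j % 4 = 3 := by omega
      rcases hjd with h0 | h0 | h0 | h0
      · rw [h0] at hmod; simp at hmod
        apply hu2; rw [hmod]; exact one_mul 1
      · rw [h0] at hmod; simp at hmod
        apply hw2
        rw [fix_of_conj h w hwV hc3 hc1 (by rw [← hu, hmod])]
        exact one_mul 1
      · rw [h0] at hmod
        apply hu2
        rw [hmod, ← zpow_add]
        norm_num [hw4z]
      · -- u = w⁻¹
        have huinv : u = w⁻¹ := by
          rw [h0] at hmod
          rw [hmod]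
          apply eq_inv_of_mul_eq_one_left
          calc w ^ (3:ℤ) * w = w ^ (3:ℤ) * w ^ (1:ℤ) := by rw [zpow_one]
            _ = w ^ (4:ℤ) := by rw [← zpow_add]; norm_num
            _ = 1 := hw4z
        have e1 : h * w * h⁻¹ = w⁻¹ := by rw [← hu]; exact huinv
        have e2 : h * w⁻¹ * h⁻¹ = w := by
          calc h * w⁻¹ * h⁻¹ = (h * w * h⁻¹)⁻¹ := by group
            _ = w := by rw [e1, inv_inv]
        have e3 : (h * h * h) * w * (h * h * h)⁻¹ = w⁻¹ := by
          calc (h * h * h) * w * (h * h * h)⁻¹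
              = h * (h * (h * w * h⁻¹) * h⁻¹) * h⁻¹ := by group
            _ = w⁻¹ := by rw [e1, e2, e1]
        have hr3 : (h * h * h).1.right = 1 := by
          show pi3 (h * h * h) = 1
          rw [map_mul, map_mul]
          rw [show pi3 h * pi3 h * pi3 h = (pi3 h) ^ 3 from (pow_three' _).symm]
          exact hc3
        have hcomm : (h * h * h) * w = w * (h * h * h) := Vcomm _ _ hr3 hwV
        have : w = w⁻¹ := by
          rw [← e3, hcomm, mul_assoc, mul_inv_cancel, mul_one]
        apply hw2
        nth_rewrite 2 [this]
        exact mul_inv_cancel w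
  · exact hbig (Or.inl hWc)
  · exact hbig (Or.inr hWc)

end Stmt13

theorem stmt13 : mu (Gmpn 4 4 3) = 12 := by
  have h12 : 12 ∈ {n | ∃ f : ↥(Gmpn 4 4 3) →* Equiv.Perm (Fin n), Function.Injective f} :=
    ⟨Stmt13.f12, Stmt13.f12_inj⟩
  refine le_antisymm (Nat.sInf_le h12) (le_csInf ⟨12, h12⟩ ?_)
  rintro n ⟨f, hf⟩
  by_contra hlt
  push_neg at hlt
  letI : MulAction Stmt13.GG (Fin n) := MulAction.compHom _ f
  have hz : f Stmt13.z1 = 1 := by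
    apply Equiv.ext
    intro ω
    have hstab : Stmt13.z1 ∈ MulAction.stabilizer Stmt13.GG ω := by
      apply Stmt13.key
      have hidx := MulAction.index_stabilizer Stmt13.GG ω
      have horb : (MulAction.orbit Stmt13.GG ω).ncard ≤ n := by
        have h1 := Set.ncard_le_ncard (Set.subset_univ (MulAction.orbit Stmt13.GG ω))
          Set.finite_univ
        rwa [Set.ncard_univ, Nat.card_eq_fintype_card, Fintype.card_fin] at h1
      have hmi := Subgroup.card_mul_index (MulAction.stabilizer Stmt13.GG ω)
      rw [Stmt13.card_GG, hidx] at hmi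
      by_contra hc
      push_neg at hc
      have h96 : (96:ℕ) ≤ 8 * 11 := by
        calc (96:ℕ) = Nat.card ↥(MulAction.stabilizer Stmt13.GG ω) *
              (MulAction.orbit Stmt13.GG ω).ncard := hmi.symm
          _ ≤ 8 * 11 := Nat.mul_le_mul (by omega) (by omega)
      omega
    rw [MulAction.mem_stabilizer_iff] at hstab
    exact hstab
  exact Stmt13.z1_ne_one (hf (hz.trans (map_one f).symm))
end

section
/- μ(C₄ × C₄ × C₄) = 12, and hence the wreath product W = C₄ ≀ Sym(3) satisfies μ(W) = 12. -/
open Multiplicative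

section Aux

open Function

/-- Transport permutations along an equivalence, as a monoid hom. -/
def permCongrHom {α β : Type*} (e : α ≃ β) : Equiv.Perm α →* Equiv.Perm β where
  toFun p := e.permCongr p
  map_one' := by ext x; simp
  map_mul' _ _ := by ext x; simp

lemma permCongrHom_injective {α β : Type*} (e : α ≃ β) :
    Function.Injective (permCongrHom e) := fun p q h => e.permCongr.injective h

lemma sq_le_two_pow {d : ℕ} (hd : d ∣ 64) : d ^ 2 ≤ 2 ^ d := by
  have hmem : d ∈ Nat.divisors 64 := Nat.mem_divisors.mpr ⟨hd, by norm_num⟩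
  fin_cases hmem <;> norm_num

/-- No faithful representation of `C₄³` on 11 points. -/
lemma lower11 (f : (Fin 3 → Cyc 4) →* Equiv.Perm (Fin 11)) : ¬ Function.Injective f := by
  intro hf
  letI act : MulAction (Fin 3 → Cyc 4) (Fin 11) := MulAction.compHom _ f
  set G := Fin 3 → Cyc 4 with hG
  let Ω := MulAction.orbitRel.Quotient G (Fin 11)
  letI : Fintype Ω := Fintype.ofFinite Ω
  letI : ∀ ω : Ω, Fintype (G ⧸ MulAction.stabilizer G (Quotient.out ω)) :=
    fun ω => Fintype.ofFinite _
  set n : Ω → ℕ := fun ω => Nat.card (G ⧸ MulAction.stabilizer G (Quotient.out ω)) with hn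
  have hsum : ∑ ω : Ω, n ω = 11 := by
    have e := (MulAction.selfEquivSigmaOrbitsQuotientStabilizer G (Fin 11)).symm
    have := Nat.card_congr e
    simpa [hn, Nat.card_eq_fintype_card, Fintype.card_sigma] using this
  have key : ∀ g : G, (∀ ω : Ω, g ∈ MulAction.stabilizer G (Quotient.out ω)) → g = 1 := by
    intro g hg
    have hfix : ∀ x : Fin 11, g • x = x := by
      intro x
      set ω : Ω := Quotient.mk'' x with hω
      have hrel : MulAction.orbitRel G (Fin 11) (Quotient.out ω) x := by
        apply Quotient.exact'
        show Quotient.mk'' _ = Quotient.mk'' _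
        simp [hω, Quotient.out_eq' ω]
      rw [MulAction.orbitRel_apply] at hrel
      obtain ⟨h, hh⟩ := hrel
      simp only at hh
      have hgo : g • Quotient.out ω = Quotient.out ω := hg ω
      apply MulAction.injective h
      calc h • g • x = (h * g) • x := (mul_smul _ _ _).symm
        _ = (g * h) • x := by rw [mul_comm]
        _ = g • h • x := mul_smul _ _ _
        _ = g • Quotient.out ω := by rw [hh]
        _ = Quotient.out ω := hgo
        _ = h • x := hh.symm
    have hfg : f g = 1 := Equiv.ext fun x => by
      simpa [MulAction.compHom_smul_def] using hfix x
    exact hf (by rw [hfg, map_one])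
  have hinj : Function.Injective
      (fun (g : G) (ω : Ω) => (g : G ⧸ MulAction.stabilizer G (Quotient.out ω))) := by
    intro a b hab
    have : a⁻¹ * b = 1 := by
      apply key
      intro ω
      have := congrFun hab ω
      exact (QuotientGroup.eq).mp this
    have := mul_eq_one_iff_inv_eq.mp this
    rw [inv_inv] at this
    exact this.symm ▸ rfl
  have hcardG : Nat.card G = 64 := by
    simp [hG, Nat.card_eq_fintype_card]
  have hle : 64 ≤ ∏ ω : Ω, n ω := by
    have := Nat.card_le_card_of_injective _ hinj
    rwa [hcardG, Nat.card_pi] at this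
  have hdvd : ∀ ω : Ω, n ω ∣ 64 := by
    intro ω
    rw [← hcardG]
    exact Subgroup.card_quotient_dvd_card _
  have hprodsq : (∏ ω : Ω, n ω) ^ 2 ≤ 2 ^ 11 := by
    calc (∏ ω : Ω, n ω) ^ 2 = ∏ ω : Ω, (n ω) ^ 2 := by
          rw [Finset.prod_pow]
      _ ≤ ∏ ω : Ω, 2 ^ (n ω) := Finset.prod_le_prod (fun _ _ => Nat.zero_le _)
          (fun ω _ => sq_le_two_pow (hdvd ω))
      _ = 2 ^ (∑ ω : Ω, n ω) := Finset.prod_pow_eq_pow_sum _ _ _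
      _ = 2 ^ 11 := by rw [hsum]
  have : 64 ^ 2 ≤ 2 ^ 11 := le_trans (Nat.pow_le_pow_left hle 2) hprodsq
  norm_num at this

/-- The imprimitive action of `C₄ ≀ Sym(3)` on `Fin 3 × ZMod 4`. -/
def wrPerm : Wr 4 3 →* Equiv.Perm (Fin 3 × ZMod 4) where
  toFun g := Equiv.prodShear g.right fun i =>
    Equiv.addLeft (Multiplicative.toAdd (g.left (g.right i)))
  map_one' := by
    ext ⟨i, x⟩ <;> simp [Equiv.prodShear]
  map_mul' g h := by
    ext ⟨i, x⟩ <;>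
      simp [Equiv.prodShear, wreathAut, add_assoc]

lemma wrPerm_injective : Function.Injective wrPerm := by
  rw [injective_iff_map_eq_one]
  intro g hg
  have h1 : ∀ p : Fin 3 × ZMod 4, wrPerm g p = p := fun p => by rw [hg]; rfl
  have hr : g.right = 1 := Equiv.ext fun i => by
    simpa [wrPerm, Equiv.prodShear] using congrArg Prod.fst (h1 (i, 0))
  have hl : g.left = 1 := by
    funext i
    have := congrArg Prod.snd (h1 (g.right.symm i, 0))
    simp [wrPerm, Equiv.prodShear] at this
    exact this
  ext <;> simp [hl, hr]

/-- An identification of the 12-element set with `Fin 12`. -/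
noncomputable def e12 : (Fin 3 × ZMod 4) ≃ Fin 12 :=
  Fintype.equivFinOfCardEq (by simp)

/-- The wreath product acting faithfully on 12 points. -/
noncomputable def wrPerm12 : Wr 4 3 →* Equiv.Perm (Fin 12) :=
  (permCongrHom e12).comp wrPerm

lemma wrPerm12_injective : Function.Injective wrPerm12 :=
  (permCongrHom_injective e12).comp wrPerm_injective

lemma key11 {n : ℕ} (hn : n ≤ 11) (f : (Fin 3 → Cyc 4) →* Equiv.Perm (Fin n))
    (hf : Function.Injective f) : False := by
  refine lower11 ((Equiv.Perm.viaEmbeddingHom (Fin.castLEEmb hn)).comp f) ?_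
  exact (Equiv.Perm.viaEmbeddingHom_injective (Fin.castLEEmb hn)).comp hf

end Aux

theorem stmt14 : mu (Fin 3 → Cyc 4) = 12 ∧ mu (Wr 4 3) = 12 := by
  have memG : 12 ∈ {n | ∃ f : (Fin 3 → Cyc 4) →* Equiv.Perm (Fin n), Function.Injective f} :=
    ⟨wrPerm12.comp (SemidirectProduct.inl), wrPerm12_injective.comp SemidirectProduct.inl_injective⟩
  have memW : 12 ∈ {n | ∃ f : Wr 4 3 →* Equiv.Perm (Fin n), Function.Injective f} :=
    ⟨wrPerm12, wrPerm12_injective⟩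
  constructor
  · refine le_antisymm (Nat.sInf_le memG) (le_csInf ⟨12, memG⟩ ?_)
    rintro m ⟨f, hf⟩
    by_contra hlt
    push_neg at hlt
    exact key11 (by omega) f hf
  · refine le_antisymm (Nat.sInf_le memW) (le_csInf ⟨12, memW⟩ ?_)
    rintro m ⟨f, hf⟩
    by_contra hlt
    push_neg at hlt
    exact key11 (by omega) (f.comp (SemidirectProduct.inl))
      (hf.comp SemidirectProduct.inl_injective)
end
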